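/- Let X be a σ-finite measure space, 1 ≤ p < ∞, E, G L_p(X)-spaces, and τ : G → E a linear map such that τ_∞ maps the open unit ball of L_p^0(X) ⊗ G onto the open unit ball of L_p^0(X) ⊗ E, and τ : G → E is surjective with the lifting property for elements of G. Then τ_∞ maps the open unit ball of L_p(X) ⊗ G onto the open unit ball of L_p(X) ⊗ E. -/

import Mathlib

open MeasureTheory
open scoped ENNReal

/-- The subspace `L_p^0(X)` of simple functions: the span in `L_p(X)` of the
(classes of) characteristic functions of finite-measure measurable sets. -/
noncomputable def Lp0Sub {X : Type*} [MeasurableSpace X] (μ : Measure X)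
    (p : ℝ≥0∞) [Fact (1 ≤ p)] : Submodule ℝ (Lp ℝ p μ) :=
  Submodule.span ℝ
    {f | ∃ (s : Set X) (hs : MeasurableSet s) (hμ : μ s ≠ ∞),
      f = indicatorConstLp p hs hμ (1 : ℝ)}

set_option maxHeartbeats 2000000 in
/-- Let `E, G` be `L_p(X)`-spaces (`1 ≤ p < ∞`, `X` σ-finite) and
`τ : G → E` a linear map such that `τ_∞` maps the open unit ball of `L_p^0(X) ⊗ G` onto
the open unit ball of `L_p^0(X) ⊗ E`, and `τ` is surjective with the lifting property
for elements. Then `τ_∞` maps the open unit ball of `L_p(X) ⊗ G` onto the open unit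
ball of `L_p(X) ⊗ E`. -/
theorem stmt17 {X : Type*} [MeasurableSpace X] (μ : Measure X) [SigmaFinite μ]
    (p : ℝ≥0∞) [Fact (1 ≤ p)] (hp : p ≠ ∞)
    {G E : Type*} [AddCommGroup G] [Module ℝ G] [AddCommGroup E] [Module ℝ E]
    (NG : TensorProduct ℝ (Lp ℝ p μ) G → ℝ) (NE : TensorProduct ℝ (Lp ℝ p μ) E → ℝ)
    (hGadd : ∀ u v, NG (u + v) ≤ NG u + NG v)
    (hGsmul : ∀ (c : ℝ) u, NG (c • u) = |c| * NG u)
    (hGdef : ∀ u, NG u = 0 ↔ u = 0)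
    (hGcontr : ∀ (a : Lp ℝ p μ →L[ℝ] Lp ℝ p μ) u,
      NG (LinearMap.rTensor G (a : Lp ℝ p μ →ₗ[ℝ] Lp ℝ p μ) u) ≤ ‖a‖ * NG u)
    (hEadd : ∀ u v, NE (u + v) ≤ NE u + NE v)
    (hEsmul : ∀ (c : ℝ) u, NE (c • u) = |c| * NE u)
    (hEdef : ∀ u, NE u = 0 ↔ u = 0)
    (hEcontr : ∀ (a : Lp ℝ p μ →L[ℝ] Lp ℝ p μ) u,
      NE (LinearMap.rTensor E (a : Lp ℝ p μ →ₗ[ℝ] Lp ℝ p μ) u) ≤ ‖a‖ * NE u)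
    (ξ₀ : Lp ℝ p μ) (hξ₀ : ‖ξ₀‖ = 1)
    (τ : G →ₗ[ℝ] E)
    -- the lifting property for elements of `G`
    (hlift : ∀ (x : E) (δ : ℝ), 0 < δ →
      ∃ y : G, τ y = x ∧ NG (ξ₀ ⊗ₜ[ℝ] y) ≤ NE (ξ₀ ⊗ₜ[ℝ] x) + δ)
    -- `τ_∞` maps the open unit ball of `L_p^0(X) ⊗ G` onto that of `L_p^0(X) ⊗ E`
    (h0onto : ∀ u, u ∈ LinearMap.range (LinearMap.rTensor E (Lp0Sub μ p).subtype) →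
      NE u < 1 →
      ∃ v, v ∈ LinearMap.range (LinearMap.rTensor G (Lp0Sub μ p).subtype) ∧ NG v < 1 ∧
        LinearMap.lTensor (Lp ℝ p μ) τ v = u) :
    ∀ u, NE u < 1 → ∃ v, NG v < 1 ∧ LinearMap.lTensor (Lp ℝ p μ) τ v = u := by
  classical
  intro u hu
  -- basic facts about the "norms"
  have hE0 : NE 0 = 0 := by simpa using hEsmul 0 0
  have hG0 : NG 0 = 0 := by simpa using hGsmul 0 0
  have hEneg : ∀ w, NE (-w) = NE w := by
    intro w; simpa using hEsmul (-1) w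
  have hEnn : ∀ w, 0 ≤ NE w := by
    intro w
    have h1 := hEadd w (-w)
    rw [add_neg_cancel, hE0, hEneg] at h1
    linarith
  have hGneg : ∀ w, NG (-w) = NG w := by
    intro w; simpa using hGsmul (-1) w
  have hGnn : ∀ w, 0 ≤ NG w := by
    intro w
    have h1 := hGadd w (-w)
    rw [add_neg_cancel, hG0, hGneg] at h1
    linarith
  -- a norming functional for ξ₀
  have hξ₀ne : ξ₀ ≠ 0 := by
    intro h; rw [h, norm_zero] at hξ₀; exact one_ne_zero hξ₀.symm
  obtain ⟨φ, hφ1, hφξ⟩ := exists_dual_vector ℝ ξ₀ (norm_ne_zero_iff.mpr hξ₀ne)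
  -- key rank-one estimates
  have keyE : ∀ (ξ : Lp ℝ p μ) (x : E), NE (ξ ⊗ₜ[ℝ] x) ≤ ‖ξ‖ * NE (ξ₀ ⊗ₜ[ℝ] x) := by
    intro ξ x
    have h := hEcontr (φ.smulRight ξ) (ξ₀ ⊗ₜ[ℝ] x)
    rw [LinearMap.rTensor_tmul] at h
    have h2 : ((φ.smulRight ξ : Lp ℝ p μ →L[ℝ] Lp ℝ p μ) :
        Lp ℝ p μ →ₗ[ℝ] Lp ℝ p μ) ξ₀ = ξ := by
      simp [hφξ, hξ₀]
    rw [h2] at h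
    calc NE (ξ ⊗ₜ[ℝ] x) ≤ ‖φ.smulRight ξ‖ * NE (ξ₀ ⊗ₜ[ℝ] x) := h
      _ = ‖ξ‖ * NE (ξ₀ ⊗ₜ[ℝ] x) := by
          rw [ContinuousLinearMap.norm_smulRight_apply, hφ1, one_mul]
  have keyG : ∀ (ξ : Lp ℝ p μ) (y : G), NG (ξ ⊗ₜ[ℝ] y) ≤ ‖ξ‖ * NG (ξ₀ ⊗ₜ[ℝ] y) := by
    intro ξ y
    have h := hGcontr (φ.smulRight ξ) (ξ₀ ⊗ₜ[ℝ] y)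
    rw [LinearMap.rTensor_tmul] at h
    have h2 : ((φ.smulRight ξ : Lp ℝ p μ →L[ℝ] Lp ℝ p μ) :
        Lp ℝ p μ →ₗ[ℝ] Lp ℝ p μ) ξ₀ = ξ := by
      simp [hφξ, hξ₀]
    rw [h2] at h
    calc NG (ξ ⊗ₜ[ℝ] y) ≤ ‖φ.smulRight ξ‖ * NG (ξ₀ ⊗ₜ[ℝ] y) := h
      _ = ‖ξ‖ * NG (ξ₀ ⊗ₜ[ℝ] y) := by
          rw [ContinuousLinearMap.norm_smulRight_apply, hφ1, one_mul]
  -- density of Lp0Sub in Lp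
  have hcl : ∀ ξ : Lp ℝ p μ, ξ ∈ (Lp0Sub μ p).topologicalClosure := by
    refine Lp.induction hp (fun f => f ∈ (Lp0Sub μ p).topologicalClosure) ?_ ?_ ?_
    · intro c s hs hμs
      apply Submodule.le_topologicalClosure
      have h1 : (indicatorConstLp p hs hμs.ne (1 : ℝ)) ∈ Lp0Sub μ p :=
        Submodule.subset_span ⟨s, hs, hμs.ne, rfl⟩
      have h2 : (Lp.simpleFunc.indicatorConst p hs hμs.ne c : Lp ℝ p μ)
          = c • indicatorConstLp p hs hμs.ne (1 : ℝ) := by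
        rw [Lp.simpleFunc.coe_indicatorConst]
        refine Lp.ext ?_
        filter_upwards [indicatorConstLp_coeFn (c := c) (hs := hs) (hμs := hμs.ne),
          Lp.coeFn_smul c (indicatorConstLp p hs hμs.ne (1 : ℝ)),
          indicatorConstLp_coeFn (c := (1 : ℝ)) (hs := hs) (hμs := hμs.ne)] with a ha hb hc
        rw [ha, hb, Pi.smul_apply, hc]
        simp [Set.indicator_apply]
      rw [h2]
      exact Submodule.smul_mem _ _ h1
    · intro f g hf hg _ hPf hPg
      exact Submodule.add_mem _ hPf hPg
    · exact (Lp0Sub μ p).isClosed_topologicalClosure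
  have happrox : ∀ (ξ : Lp ℝ p μ) (δ : ℝ), 0 < δ → ∃ ξ' ∈ Lp0Sub μ p, ‖ξ - ξ'‖ < δ := by
    intro ξ δ hδ
    have h := hcl ξ
    rw [← SetLike.mem_coe, Submodule.topologicalClosure_coe, Metric.mem_closure_iff] at h
    obtain ⟨b, hb, hdist⟩ := h δ hδ
    exact ⟨b, hb, by rwa [dist_eq_norm] at hdist⟩
  -- the budget
  set ε : ℝ := (1 - NE u) / 3 with hεdef
  have hε : 0 < ε := by
    have := hu; rw [hεdef]; linarith
  -- finite representation of u
  obtain ⟨S, hS⟩ := TensorProduct.exists_finset u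
  set n : ℕ := S.card with hn
  have hε' : 0 < ε / (n + 1) := by positivity
  -- lifts of the E-components
  choose y hyτ hyn using fun i : Lp ℝ p μ × E => hlift i.2 1 one_pos
  have hc : ∀ i : Lp ℝ p μ × E, 0 < NE (ξ₀ ⊗ₜ[ℝ] i.2) + 1 := by
    intro i; have := hEnn (ξ₀ ⊗ₜ[ℝ] i.2); linarith
  -- simple approximations of the Lp-components
  choose ξ' hξ'mem hξ'n using fun i : Lp ℝ p μ × E =>
    happrox i.1 (ε / (n + 1) / (NE (ξ₀ ⊗ₜ[ℝ] i.2) + 1)) (div_pos hε' (hc i))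
  set u₀ : TensorProduct ℝ (Lp ℝ p μ) E := ∑ i ∈ S, (ξ' i) ⊗ₜ[ℝ] i.2 with hu₀def
  set v₁ : TensorProduct ℝ (Lp ℝ p μ) G := ∑ i ∈ S, (i.1 - ξ' i) ⊗ₜ[ℝ] (y i) with hv₁def
  have hrep : u - u₀ = ∑ i ∈ S, (i.1 - ξ' i) ⊗ₜ[ℝ] i.2 := by
    rw [hS, hu₀def, ← Finset.sum_sub_distrib]
    exact Finset.sum_congr rfl fun i _ => (TensorProduct.sub_tmul _ _ _).symm
  -- termwise bounds
  have htermE : ∀ i : Lp ℝ p μ × E, NE ((i.1 - ξ' i) ⊗ₜ[ℝ] i.2) ≤ ε / (n + 1) := by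
    intro i
    calc NE ((i.1 - ξ' i) ⊗ₜ[ℝ] i.2) ≤ ‖i.1 - ξ' i‖ * NE (ξ₀ ⊗ₜ[ℝ] i.2) := keyE _ _
      _ ≤ (ε / (n + 1) / (NE (ξ₀ ⊗ₜ[ℝ] i.2) + 1)) * (NE (ξ₀ ⊗ₜ[ℝ] i.2) + 1) :=
          mul_le_mul (hξ'n i).le (by linarith [hEnn (ξ₀ ⊗ₜ[ℝ] i.2)]) (hEnn _)
            (div_pos hε' (hc i)).le
      _ = ε / (n + 1) := div_mul_cancel₀ _ (hc i).ne'
  have htermG : ∀ i : Lp ℝ p μ × E, NG ((i.1 - ξ' i) ⊗ₜ[ℝ] (y i)) ≤ ε / (n + 1) := by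
    intro i
    calc NG ((i.1 - ξ' i) ⊗ₜ[ℝ] (y i)) ≤ ‖i.1 - ξ' i‖ * NG (ξ₀ ⊗ₜ[ℝ] (y i)) := keyG _ _
      _ ≤ (ε / (n + 1) / (NE (ξ₀ ⊗ₜ[ℝ] i.2) + 1)) * (NE (ξ₀ ⊗ₜ[ℝ] i.2) + 1) :=
          mul_le_mul (hξ'n i).le (hyn i) (hGnn _) (div_pos hε' (hc i)).le
      _ = ε / (n + 1) := div_mul_cancel₀ _ (hc i).ne'
  have hsumlt : ∀ f : Lp ℝ p μ × E → ℝ, (∀ i, f i ≤ ε / (n + 1)) → ∑ i ∈ S, f i < ε := by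
    intro f hf
    calc ∑ i ∈ S, f i ≤ ∑ _i ∈ S, ε / (n + 1) := Finset.sum_le_sum fun i _ => hf i
      _ = (n : ℝ) * (ε / (n + 1)) := by rw [Finset.sum_const, ← hn, nsmul_eq_mul]
      _ < ((n : ℝ) + 1) * (ε / (n + 1)) := by
          apply mul_lt_mul_of_pos_right _ hε'; linarith
      _ = ε := by field_simp
  have hEub : NE (u - u₀) < ε := by
    rw [hrep]
    exact lt_of_le_of_lt (Finset.le_sum_of_subadditive NE hE0.le hEadd S _)
      (hsumlt _ fun i => htermE i)
  have hGub : NG v₁ < ε := by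
    rw [hv₁def]
    exact lt_of_le_of_lt (Finset.le_sum_of_subadditive NG hG0.le hGadd S _)
      (hsumlt _ fun i => htermG i)
  -- u₀ lies in the range of the simple part
  have hu₀mem : u₀ ∈ LinearMap.range (LinearMap.rTensor E (Lp0Sub μ p).subtype) := by
    rw [hu₀def]
    refine Submodule.sum_mem _ fun i _ => ?_
    exact ⟨(⟨ξ' i, hξ'mem i⟩ : Lp0Sub μ p) ⊗ₜ[ℝ] i.2, by
      rw [LinearMap.rTensor_tmul]; rfl⟩
  -- v₁ lifts u - u₀
  have hv₁τ : LinearMap.lTensor (Lp ℝ p μ) τ v₁ = u - u₀ := by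
    rw [hv₁def, map_sum, hrep]
    exact Finset.sum_congr rfl fun i _ => by rw [LinearMap.lTensor_tmul, hyτ]
  -- bound on NE u₀
  have hu₀lt : NE u₀ < NE u + ε := by
    have h := hEadd u (u₀ - u)
    have e : u + (u₀ - u) = u₀ := by abel
    rw [e] at h
    have h2 : NE (u₀ - u) = NE (u - u₀) := by rw [← neg_sub u u₀, hEneg]
    rw [h2] at h
    linarith
  set r : ℝ := NE u + ε with hrdef
  have hr : 0 < r := by have := hEnn u; rw [hrdef]; linarith
  -- lift the scaled simple part
  have hw : NE (r⁻¹ • u₀) < 1 := by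
    rw [hEsmul, abs_of_pos (inv_pos.mpr hr)]
    calc r⁻¹ * NE u₀ < r⁻¹ * r := by
          exact mul_lt_mul_of_pos_left hu₀lt (inv_pos.mpr hr)
      _ = 1 := inv_mul_cancel₀ hr.ne'
  obtain ⟨v₀', _, hv₀'n, hv₀'e⟩ := h0onto (r⁻¹ • u₀)
    (Submodule.smul_mem _ _ hu₀mem) hw
  refine ⟨r • v₀' + v₁, ?_, ?_⟩
  · have h1 : NG (r • v₀' + v₁) ≤ NG (r • v₀') + NG v₁ := hGadd _ _
    have h2 : NG (r • v₀') = r * NG v₀' := by rw [hGsmul, abs_of_pos hr]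
    have h3 : r * NG v₀' < r * 1 := mul_lt_mul_of_pos_left hv₀'n hr
    have : NG (r • v₀' + v₁) < r + ε := by rw [h2] at h1; linarith
    rw [hrdef, hεdef] at this
    linarith
  · rw [map_add, LinearMap.map_smul, hv₀'e, smul_inv_smul₀ hr.ne', hv₁τ]
    abel
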